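/- Let f : ℝᵖ → ℝ be a convex piecewise-linear function, nondecreasing in each coordinate, satisfying f(z₁+C,…,z_p+C) = f(z) + C for all real C. Then f is a finite maximum of affine functions f_j(z) = b_j + Σᵢ a_{i,j} zᵢ where for each j, the coefficients satisfy a_{i,j} ∈ [0,1] and Σᵢ a_{i,j} = 1. -/

import Mathlib

/-- A convex piecewise-linear function on `ℝᵖ` (a finite maximum of affine functions)
that is nondecreasing in each coordinate and satisfies `f(z + C·𝟙) = f(z) + C` is a
finite maximum of affine functions `z ↦ bⱼ + ∑ᵢ aᵢⱼ zᵢ` whose coefficient vectors lie in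
the simplex: `aᵢⱼ ∈ [0,1]` and `∑ᵢ aᵢⱼ = 1` for each `j`. -/
theorem stmt_12 {ι : Type*} [Fintype ι] [Nonempty ι] (f : (ι → ℝ) → ℝ)
    (hPL : ∃ (m : ℕ) (A₀ : Fin (m + 1) → ι → ℝ) (B₀ : Fin (m + 1) → ℝ),
      ∀ z, f z = Finset.univ.sup' Finset.univ_nonempty
        fun j => B₀ j + ∑ i, A₀ j i * z i)
    (hmono : ∀ z z' : ι → ℝ, z ≤ z' → f z ≤ f z')
    (htrans : ∀ (z : ι → ℝ) (C : ℝ), f (fun i => z i + C) = f z + C) :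
    ∃ (n : ℕ) (A : Fin (n + 1) → ι → ℝ) (B : Fin (n + 1) → ℝ),
      (∀ j i, A j i ∈ Set.Icc (0:ℝ) 1) ∧
      (∀ j, ∑ i, A j i = 1) ∧
      (∀ z, f z = Finset.univ.sup' Finset.univ_nonempty
        fun j => B j + ∑ i, A j i * z i) := by
  classical
  obtain ⟨m, A₀, B₀, hf⟩ := hPL
  set g : Fin (m + 1) → (ι → ℝ) → ℝ := fun j z => B₀ j + ∑ i, A₀ j i * z i with hg
  -- each affine piece is ≤ f everywhere
  have hle : ∀ j z, g j z ≤ f z := by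
    intro j z
    rw [hf z]
    exact Finset.le_sup' (fun j => g j z) (Finset.mem_univ j)
  -- set of active pieces
  set S : Finset (Fin (m + 1)) :=
    Finset.univ.filter (fun j => ∃ z, f z = g j z) with hS
  have hattain : ∀ z, ∃ j, f z = g j z := by
    intro z
    obtain ⟨b, _, hb⟩ := Finset.exists_mem_eq_sup' (Finset.univ_nonempty (α := Fin (m + 1)))
      (fun j => g j z)
    exact ⟨b, (hf z).trans hb⟩
  have hSne : S.Nonempty := by
    obtain ⟨j, hj⟩ := hattain 0
    exact ⟨j, by simp [hS]; exact ⟨0, hj⟩⟩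
  -- active pieces have nonneg coefficients
  have hnonneg : ∀ j ∈ S, ∀ i, 0 ≤ A₀ j i := by
    intro j hj i
    obtain ⟨z₀, hz₀⟩ : ∃ z, f z = g j z := by
      simpa [hS] using hj
    set z' : ι → ℝ := fun k => z₀ k - if k = i then 1 else 0 with hz'
    have h1 : f z' ≤ f z₀ := by
      apply hmono
      intro k
      by_cases hk : k = i <;> simp [hz', hk]
    have h2 : g j z' = g j z₀ - A₀ j i := by
      simp only [hg, hz', mul_sub]
      rw [Finset.sum_sub_distrib]
      have : ∑ k, A₀ j k * (if k = i then (1:ℝ) else 0) = A₀ j i := by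
        rw [Finset.sum_eq_single i] <;> simp +contextual
      rw [this]; ring
    have h3 := hle j z'
    rw [hz₀] at h1
    rw [h2] at h3
    linarith
  -- active pieces have coefficients summing to 1
  have hsum : ∀ j ∈ S, ∑ i, A₀ j i = 1 := by
    intro j hj
    obtain ⟨z₀, hz₀⟩ : ∃ z, f z = g j z := by
      simpa [hS] using hj
    have key : ∀ C : ℝ, C * ∑ i, A₀ j i ≤ C := by
      intro C
      have h1 := hle j (fun i => z₀ i + C)
      rw [htrans z₀ C] at h1
      have h2 : g j (fun i => z₀ i + C) = g j z₀ + C * ∑ i, A₀ j i := by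
        simp only [hg, mul_add]
        rw [Finset.sum_add_distrib]
        have : ∑ k, A₀ j k * C = C * ∑ k, A₀ j k := by
          rw [Finset.mul_sum]; congr 1; ext k; ring
        rw [this]; ring
      rw [h2, ← hz₀] at h1
      linarith
    have k1 := key 1
    have k2 := key (-1)
    linarith
  -- enumerate S
  obtain ⟨n, hn⟩ : ∃ n, S.card = n + 1 :=
    ⟨S.card - 1, (Nat.succ_pred_eq_of_pos (Finset.card_pos.mpr hSne)).symm⟩
  set e := S.orderIsoOfFin hn with he
  refine ⟨n, fun j => A₀ (e j), fun j => B₀ (e j), ?_, ?_, ?_⟩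
  · intro j i
    have h0 := hnonneg (e j) (e j).2 i
    have hs := hsum (e j) (e j).2
    constructor
    · exact h0
    · have : A₀ (e j : Fin (m+1)) i ≤ ∑ k, A₀ (e j : Fin (m+1)) k :=
        Finset.single_le_sum (fun k _ => hnonneg (e j) (e j).2 k) (Finset.mem_univ i)
      linarith
  · intro j; exact hsum (e j) (e j).2
  · intro z
    apply le_antisymm
    · obtain ⟨j₀, hj₀⟩ := hattain z
      have hj₀S : j₀ ∈ S := by simp [hS]; exact ⟨z, hj₀⟩
      have h := Finset.le_sup' (s := (Finset.univ : Finset (Fin (n+1))))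
        (fun j : Fin (n+1) => B₀ (e j : Fin (m+1)) + ∑ i, A₀ (e j : Fin (m+1)) i * z i)
        (Finset.mem_univ (e.symm ⟨j₀, hj₀S⟩))
      simp only [OrderIso.apply_symm_apply] at h
      rw [hj₀]; exact h
    · apply Finset.sup'_le
      intro j _
      exact hle (e j) z
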